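/- The co-spectral radius function H ↦ ρ(Γ/H) is lower semi-continuous on the Chabauty space Sub(Γ) of subgroups of a countable group Γ: if H_n → H in Sub(Γ), then ρ(Γ/H) ≤ liminf_n ρ(Γ/H_n). -/

import Mathlib

set_option maxHeartbeats 1000000

open Filter
open scoped ENNReal NNReal

section Aux

variable {ι : Type*}

private lemma rpow_two_eq (x : ℝ) : x ^ ((2:ℝ≥0∞)).toReal = x ^ 2 := by
  rw [show ((2:ℝ≥0∞)).toReal = ((2:ℕ):ℝ) by norm_num, Real.rpow_natCast]

private lemma hasSum_sq_lp (f : lp (fun _ : ι => ℝ) 2) :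
    HasSum (fun i => ((f : ∀ _, ℝ) i) ^ 2) (‖f‖ ^ 2) := by
  have h := lp.hasSum_norm (by norm_num : 0 < ((2:ℝ≥0∞)).toReal) f
  simp only [rpow_two_eq, Real.norm_eq_abs, sq_abs] at h
  exact h

private lemma norm_sq_eq_sum_of_support (f : lp (fun _ : ι => ℝ) 2) (s : Finset ι)
    (h : ∀ i ∉ s, (f : ∀ _, ℝ) i = 0) :
    ‖f‖ ^ 2 = ∑ i ∈ s, ((f : ∀ _, ℝ) i) ^ 2 :=
  (hasSum_sq_lp f).unique (hasSum_sum_of_ne_finset_zero (fun i hi => by rw [h i hi]; ring))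

private lemma sum_sq_le_norm_sq (f : lp (fun _ : ι => ℝ) 2) (s : Finset ι) :
    ∑ i ∈ s, ((f : ∀ _, ℝ) i) ^ 2 ≤ ‖f‖ ^ 2 :=
  sum_le_hasSum s (fun i _ => sq_nonneg _) (hasSum_sq_lp f)

private lemma le_of_sq_le_sq' {a b : ℝ} (ha : 0 ≤ a) (hb : 0 ≤ b) (h : a ^ 2 ≤ b ^ 2) :
    a ≤ b := by
  have := Real.sqrt_le_sqrt h
  rwa [Real.sqrt_sq ha, Real.sqrt_sq hb] at this

private lemma opnorm_avg_le_one {Γ : Type*} [Group Γ] (S : Finset Γ) (hSne : S.Nonempty)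
    (H : Subgroup Γ)
    (M : lp (fun _ : Γ ⧸ H => ℝ) 2 →L[ℝ] lp (fun _ : Γ ⧸ H => ℝ) 2)
    (hM : ∀ (φ : lp (fun _ : Γ ⧸ H => ℝ) 2) (x : Γ ⧸ H),
      (M φ : ∀ _, ℝ) x = (S.card : ℝ)⁻¹ * ∑ s ∈ S, (φ : ∀ _, ℝ) (s • x)) :
    ‖M‖ ≤ 1 := by
  refine M.opNorm_le_bound zero_le_one (fun φ => ?_)
  rw [one_mul]
  have hc : (0:ℝ) < (S.card : ℝ) := by exact_mod_cast hSne.card_pos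
  refine le_of_sq_le_sq' (norm_nonneg _) (norm_nonneg _) ?_
  have hterm : ∀ s : Γ, HasSum (fun x : Γ ⧸ H => ((φ : ∀ _, ℝ) (s • x)) ^ 2) (‖φ‖ ^ 2) := by
    intro s
    exact (Equiv.hasSum_iff (f := fun y => ((φ : ∀ _, ℝ) y) ^ 2)
      (MulAction.toPerm s : Equiv.Perm (Γ ⧸ H))).mpr (hasSum_sq_lp φ)
  have hmaj : HasSum (fun x : Γ ⧸ H => (S.card : ℝ)⁻¹ * ∑ s ∈ S, ((φ : ∀ _, ℝ) (s • x)) ^ 2)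
      ((S.card : ℝ)⁻¹ * ∑ _s ∈ S, ‖φ‖ ^ 2) :=
    (hasSum_sum (fun s _ => hterm s)).mul_left _
  have hpt : ∀ x : Γ ⧸ H,
      ((M φ : ∀ _, ℝ) x) ^ 2 ≤ (S.card : ℝ)⁻¹ * ∑ s ∈ S, ((φ : ∀ _, ℝ) (s • x)) ^ 2 := by
    intro x
    rw [hM φ x]
    have key := sq_sum_le_card_mul_sum_sq (s := S) (f := fun s => (φ : ∀ _, ℝ) (s • x))
    calc ((S.card : ℝ)⁻¹ * ∑ s ∈ S, (φ : ∀ _, ℝ) (s • x)) ^ 2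
        = (S.card : ℝ)⁻¹ * (S.card : ℝ)⁻¹ * (∑ s ∈ S, (φ : ∀ _, ℝ) (s • x)) ^ 2 := by ring
      _ ≤ (S.card : ℝ)⁻¹ * (S.card : ℝ)⁻¹ *
          ((S.card : ℝ) * ∑ s ∈ S, ((φ : ∀ _, ℝ) (s • x)) ^ 2) := by
          apply mul_le_mul_of_nonneg_left _ (by positivity)
          exact_mod_cast key
      _ = (S.card : ℝ)⁻¹ * ∑ s ∈ S, ((φ : ∀ _, ℝ) (s • x)) ^ 2 := by
          field_simp
  have := hasSum_le hpt (hasSum_sq_lp (M φ)) hmaj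
  calc ‖M φ‖ ^ 2 ≤ (S.card : ℝ)⁻¹ * ∑ _s ∈ S, ‖φ‖ ^ 2 := this
    _ = ‖φ‖ ^ 2 := by
        rw [Finset.sum_const, nsmul_eq_mul]
        field_simp

end Aux

/-- The co-spectral radius `H ↦ ρ(Γ/H)` (the norm of the averaging
operator on `ℓ²(Γ/H)`) is lower semi-continuous on the Chabauty space of subgroups of a
countable group: if `H_n → H` pointwise (i.e. for each `γ`, eventually
`γ ∈ H_n ↔ γ ∈ H`), then `ρ(Γ/H) ≤ liminf_n ρ(Γ/H_n)`. -/
theorem cospectral_radius_lower_semicontinuous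
    {Γ : Type*} [Group Γ] [Countable Γ]
    (S : Finset Γ) (hSne : S.Nonempty) (hSsym : ∀ s ∈ S, s⁻¹ ∈ S)
    (ρ : Subgroup Γ → ℝ)
    (hρ : ∀ H : Subgroup Γ,
      ∀ M : lp (fun _ : Γ ⧸ H => ℝ) 2 →L[ℝ] lp (fun _ : Γ ⧸ H => ℝ) 2,
        (∀ (φ : lp (fun _ : Γ ⧸ H => ℝ) 2) (x : Γ ⧸ H),
          (M φ : ∀ _, ℝ) x = (S.card : ℝ)⁻¹ * ∑ s ∈ S, (φ : ∀ _, ℝ) (s • x)) →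
        ρ H = ‖M‖)
    (hex : ∀ H : Subgroup Γ,
      ∃ M : lp (fun _ : Γ ⧸ H => ℝ) 2 →L[ℝ] lp (fun _ : Γ ⧸ H => ℝ) 2,
        ∀ (φ : lp (fun _ : Γ ⧸ H => ℝ) 2) (x : Γ ⧸ H),
          (M φ : ∀ _, ℝ) x = (S.card : ℝ)⁻¹ * ∑ s ∈ S, (φ : ∀ _, ℝ) (s • x))
    (Hseq : ℕ → Subgroup Γ) (H : Subgroup Γ)
    (hconv : ∀ γ : Γ, ∀ᶠ n in atTop, (γ ∈ Hseq n ↔ γ ∈ H)) :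
    ρ H ≤ liminf (fun n => ρ (Hseq n)) atTop := by
  classical
  obtain ⟨M, hM⟩ := hex H
  have hρH : ρ H = ‖M‖ := hρ H M hM
  set C : ℝ := ‖M‖ with hC
  have hCnn : 0 ≤ C := norm_nonneg _
  have hρn_nonneg : ∀ n, 0 ≤ ρ (Hseq n) := by
    intro n
    obtain ⟨Mn, hMn⟩ := hex (Hseq n)
    rw [hρ _ Mn hMn]; exact norm_nonneg _
  have hρn_le : ∀ n, ρ (Hseq n) ≤ 1 := by
    intro n
    obtain ⟨Mn, hMn⟩ := hex (Hseq n)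
    rw [hρ _ Mn hMn]
    exact opnorm_avg_le_one S hSne _ Mn hMn
  have hcard : (0:ℝ) < (S.card : ℝ) := by exact_mod_cast hSne.card_pos
  have key : ∀ ε : ℝ, 0 < ε → ∀ᶠ n in atTop, C - ε ≤ ρ (Hseq n) := by
    intro ε hε
    rcases le_or_gt (C - ε) 0 with h0 | h0
    · exact Eventually.of_forall fun n => h0.trans (hρn_nonneg n)
    obtain ⟨x, hx1, hxr⟩ := M.exists_lt_apply_of_lt_opNorm
      (r := C - ε/2) (by rw [← hC]; linarith)
    set δ : ℝ := ε / (2*(2*C+1)) with hδdef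
    have hδpos : 0 < δ := by
      apply div_pos hε; nlinarith
    have hδval : δ * (2*(2*C+1)) = ε := by
      rw [hδdef]; exact div_mul_cancel₀ ε (by linarith : (0:ℝ) < 2*(2*C+1)).ne'
    haveI : Fact (1 ≤ (2:ℝ≥0∞)) := ⟨one_le_two⟩
    have hsum := lp.hasSum_single (by norm_num : (2:ℝ≥0∞) ≠ ⊤) x
    obtain ⟨T, hT⟩ : ∃ T : Finset (Γ ⧸ H),
        ‖(∑ i ∈ T, lp.single 2 i ((x : ∀ _, ℝ) i)) - x‖ < δ := by
      have h2 := Metric.tendsto_nhds.mp hsum δ hδpos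
      obtain ⟨T, hT⟩ := h2.exists
      exact ⟨T, by simpa [dist_eq_norm] using hT⟩
    set ψ : lp (fun _ : Γ ⧸ H => ℝ) 2 :=
      ∑ i ∈ T, lp.single 2 i ((x : ∀ _, ℝ) i) with hψdef
    have hψcoe : ∀ y, (ψ : ∀ _, ℝ) y = if y ∈ T then (x : ∀ _, ℝ) y else 0 := by
      intro y
      rw [hψdef, lp.coeFn_sum, Finset.sum_apply]
      simp [lp.single_apply, Pi.single_apply]
    have hψ_near : ‖ψ - x‖ < δ := hT
    have hψ_norm_le : ‖ψ‖ ≤ 1 + δ := by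
      have h1 : ‖ψ‖ - ‖x‖ ≤ ‖ψ - x‖ := norm_sub_norm_le _ _
      linarith
    have hMψ_lb : C - ε/2 - C*δ ≤ ‖M ψ‖ := by
      have h1 : ‖M x - M ψ‖ ≤ C * δ := by
        calc ‖M x - M ψ‖ = ‖M (x - ψ)‖ := by rw [map_sub]
          _ ≤ C * ‖x - ψ‖ := M.le_opNorm _
          _ ≤ C * δ := by
              have h2 : ‖x - ψ‖ = ‖ψ - x‖ := norm_sub_rev _ _
              nlinarith
      have h2 : ‖M x‖ ≤ ‖M ψ‖ + ‖M x - M ψ‖ := norm_le_norm_add_norm_sub' _ _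
      linarith
    have harith : (C - ε) * (1 + δ) ≤ C - ε/2 - C*δ := by
      nlinarith [mul_nonneg hδpos.le hε.le, hδpos.le]
    have hMψ_pos : 0 < ‖M ψ‖ := by
      have : (0:ℝ) < (C - ε) * (1 + δ) := by nlinarith
      linarith
    have hψ_pos : 0 < ‖ψ‖ := by
      rcases eq_or_ne ψ 0 with h | h
      · rw [h, map_zero, norm_zero] at hMψ_pos; exact absurd hMψ_pos (lt_irrefl _)
      · exact norm_pos_iff.mpr h
    have hMψ_ge : (C - ε) * ‖ψ‖ ≤ ‖M ψ‖ := by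
      have h1 : (C - ε) * ‖ψ‖ ≤ (C - ε) * (1 + δ) :=
        mul_le_mul_of_nonneg_left hψ_norm_le h0.le
      linarith
    -- support of M ψ
    set U : Finset (Γ ⧸ H) := S.biUnion (fun s => T.image (fun t => s⁻¹ • t)) with hUdef
    have hMψ_supp : ∀ y ∉ U, (M ψ : ∀ _, ℝ) y = 0 := by
      intro y hy
      rw [hM]
      have hz : ∀ s ∈ S, (ψ : ∀ _, ℝ) (s • y) = 0 := by
        intro s hs
        rw [hψcoe, if_neg]
        intro hmem
        exact hy (Finset.mem_biUnion.mpr ⟨s, hs, Finset.mem_image.mpr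
          ⟨s • y, hmem, by rw [inv_smul_smul]⟩⟩)
      rw [Finset.sum_eq_zero hz, mul_zero]
    -- eventual agreement on the relevant finite set of group elements
    set G : Finset Γ :=
      ((T ×ˢ T).image fun p => (Quotient.out p.1)⁻¹ * Quotient.out p.2) ∪
      ((U ×ˢ U).image fun p => (Quotient.out p.1)⁻¹ * Quotient.out p.2) ∪
      (((S ×ˢ U) ×ˢ T).image fun p =>
        (p.1.1 * Quotient.out p.1.2)⁻¹ * Quotient.out p.2) with hGdef
    have hev : ∀ᶠ n in atTop, ∀ γ ∈ G, (γ ∈ Hseq n ↔ γ ∈ H) :=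
      (eventually_all_finset G).mpr (fun γ _ => hconv γ)
    filter_upwards [hev] with n hn
    set K := Hseq n with hKdef
    obtain ⟨Mn, hMn⟩ := hex K
    rw [hρ K Mn hMn]
    set mkn : Γ ⧸ H → Γ ⧸ K := fun q => QuotientGroup.mk q.out with hmkn
    -- injectivity on T
    have hinjT : ∀ x₁ ∈ T, ∀ x₂ ∈ T, mkn x₁ = mkn x₂ → x₁ = x₂ := by
      intro x₁ h₁ x₂ h₂ h
      have hγ : ((Quotient.out x₁)⁻¹ * Quotient.out x₂ ∈ K ↔
          (Quotient.out x₁)⁻¹ * Quotient.out x₂ ∈ H) := by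
        apply hn
        rw [hGdef]
        exact Finset.mem_union_left _ (Finset.mem_union_left _
          (Finset.mem_image.mpr ⟨(x₁, x₂), Finset.mem_product.mpr ⟨h₁, h₂⟩, rfl⟩))
      have h3 : (Quotient.out x₁)⁻¹ * Quotient.out x₂ ∈ K := QuotientGroup.eq.mp h
      have h4 := QuotientGroup.eq.mpr (hγ.mp h3)
      rwa [QuotientGroup.out_eq', QuotientGroup.out_eq'] at h4
    have hinjU : ∀ x₁ ∈ U, ∀ x₂ ∈ U, mkn x₁ = mkn x₂ → x₁ = x₂ := by
      intro x₁ h₁ x₂ h₂ h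
      have hγ : ((Quotient.out x₁)⁻¹ * Quotient.out x₂ ∈ K ↔
          (Quotient.out x₁)⁻¹ * Quotient.out x₂ ∈ H) := by
        apply hn
        rw [hGdef]
        exact Finset.mem_union_left _ (Finset.mem_union_right _
          (Finset.mem_image.mpr ⟨(x₁, x₂), Finset.mem_product.mpr ⟨h₁, h₂⟩, rfl⟩))
      have h3 : (Quotient.out x₁)⁻¹ * Quotient.out x₂ ∈ K := QuotientGroup.eq.mp h
      have h4 := QuotientGroup.eq.mpr (hγ.mp h3)
      rwa [QuotientGroup.out_eq', QuotientGroup.out_eq'] at h4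
    -- the key matching iff
    have hmatch : ∀ s ∈ S, ∀ u ∈ U, ∀ t ∈ T,
        ((QuotientGroup.mk (s * Quotient.out u) : Γ ⧸ K) = mkn t ↔ s • u = t) := by
      intro s hs u hu t ht
      have hγ : ((s * Quotient.out u)⁻¹ * Quotient.out t ∈ K ↔
          (s * Quotient.out u)⁻¹ * Quotient.out t ∈ H) := by
        apply hn
        rw [hGdef]
        refine Finset.mem_union_right _ (Finset.mem_image.mpr
          ⟨((s, u), t), Finset.mem_product.mpr
            ⟨Finset.mem_product.mpr ⟨hs, hu⟩, ht⟩, rfl⟩)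
      constructor
      · intro h
        have h3 := QuotientGroup.eq.mpr (hγ.mp (QuotientGroup.eq.mp h))
        rw [QuotientGroup.out_eq'] at h3
        calc s • u = s • (QuotientGroup.mk (Quotient.out u) : Γ ⧸ H) := by
              rw [QuotientGroup.out_eq']
          _ = QuotientGroup.mk (s * Quotient.out u) := rfl
          _ = t := h3
      · intro h
        apply QuotientGroup.eq.mpr
        apply hγ.mpr
        apply QuotientGroup.eq.mp
        rw [QuotientGroup.out_eq']
        calc (QuotientGroup.mk (s * Quotient.out u) : Γ ⧸ H)
            = s • (QuotientGroup.mk (Quotient.out u) : Γ ⧸ H) := rfl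
          _ = s • u := by rw [QuotientGroup.out_eq']
          _ = t := h
    -- transported vector
    set ψn : lp (fun _ : Γ ⧸ K => ℝ) 2 :=
      ∑ t ∈ T, lp.single 2 (mkn t) ((ψ : ∀ _, ℝ) t) with hψndef
    have hψncoe : ∀ z, (ψn : ∀ _, ℝ) z =
        ∑ t ∈ T, (if z = mkn t then (ψ : ∀ _, ℝ) t else 0) := by
      intro z
      rw [hψndef]
      rw [lp.coeFn_sum]
      rw [Finset.sum_apply]
      refine Finset.sum_congr rfl (fun t _ => ?_)
      rw [lp.single_apply]
      split_ifs with h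
      · subst h; simp
      · simp [Pi.single_apply, h]
    have hψn_apply : ∀ t ∈ T, (ψn : ∀ _, ℝ) (mkn t) = (ψ : ∀ _, ℝ) t := by
      intro t ht
      rw [hψncoe]
      rw [Finset.sum_eq_single_of_mem t ht]
      · rw [if_pos rfl]
      · intro b hb hne
        rw [if_neg]
        intro h
        exact hne (hinjT b hb t ht h.symm)
    have hψn_zero : ∀ z, (∀ t ∈ T, z ≠ mkn t) → (ψn : ∀ _, ℝ) z = 0 := by
      intro z hz
      rw [hψncoe]
      exact Finset.sum_eq_zero (fun t ht => if_neg (hz t ht))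
    have hψn_norm : ‖ψn‖ = ‖ψ‖ := by
      have e1 : ‖ψn‖ ^ 2 = ∑ z ∈ T.image mkn, ((ψn : ∀ _, ℝ) z) ^ 2 := by
        refine norm_sq_eq_sum_of_support ψn _ (fun z hz => hψn_zero z ?_)
        intro t ht h
        exact hz (Finset.mem_image.mpr ⟨t, ht, h.symm⟩)
      rw [Finset.sum_image hinjT] at e1
      have e2 : ∑ t ∈ T, ((ψn : ∀ _, ℝ) (mkn t)) ^ 2 = ∑ t ∈ T, ((ψ : ∀ _, ℝ) t) ^ 2 :=
        Finset.sum_congr rfl (fun t ht => by rw [hψn_apply t ht])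
      have e3 : ‖ψ‖ ^ 2 = ∑ t ∈ T, ((ψ : ∀ _, ℝ) t) ^ 2 :=
        norm_sq_eq_sum_of_support ψ T (fun y hy => by rw [hψcoe, if_neg hy])
      have e4 : ‖ψn‖ ^ 2 = ‖ψ‖ ^ 2 := by rw [e1, e2, ← e3]
      have := congrArg Real.sqrt e4
      rwa [Real.sqrt_sq (norm_nonneg _), Real.sqrt_sq (norm_nonneg _)] at this
    -- value matching for the operator
    have hMval : ∀ u ∈ U, (Mn ψn : ∀ _, ℝ) (mkn u) = (M ψ : ∀ _, ℝ) u := by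
      intro u hu
      rw [hMn, hM]
      congr 1
      refine Finset.sum_congr rfl (fun s hs => ?_)
      have hsmul : s • mkn u = (QuotientGroup.mk (s * Quotient.out u) : Γ ⧸ K) := rfl
      rw [hsmul, hψncoe]
      by_cases hst : s • u ∈ T
      · rw [Finset.sum_eq_single_of_mem (s • u) hst]
        · rw [if_pos ((hmatch s hs u hu _ hst).mpr rfl)]
        · intro b hb hne
          refine if_neg (fun h => hne ?_)
          exact ((hmatch s hs u hu b hb).mp h).symm
      · have hz : ∀ t ∈ T,
            (if (QuotientGroup.mk (s * Quotient.out u) : Γ ⧸ K) = mkn t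
              then (ψ : ∀ _, ℝ) t else 0) = 0 := by
          intro t ht
          refine if_neg (fun h => hst ?_)
          have h2 : s • u = t := (hmatch s hs u hu t ht).mp h
          rw [h2]; exact ht
        rw [Finset.sum_eq_zero hz, hψcoe, if_neg hst]
    have h5 : ‖M ψ‖ ^ 2 ≤ ‖Mn ψn‖ ^ 2 := by
      have e1 : ‖M ψ‖ ^ 2 = ∑ u ∈ U, ((M ψ : ∀ _, ℝ) u) ^ 2 :=
        norm_sq_eq_sum_of_support _ U hMψ_supp
      have e2 : ∑ u ∈ U, ((M ψ : ∀ _, ℝ) u) ^ 2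
          = ∑ z ∈ U.image mkn, ((Mn ψn : ∀ _, ℝ) z) ^ 2 := by
        rw [Finset.sum_image hinjU]
        exact Finset.sum_congr rfl (fun u hu => by rw [hMval u hu])
      rw [e1, e2]
      exact sum_sq_le_norm_sq _ _
    have h6 : ‖M ψ‖ ≤ ‖Mn ψn‖ := le_of_sq_le_sq' (norm_nonneg _) (norm_nonneg _) h5
    have h7 : ‖Mn ψn‖ ≤ ‖Mn‖ * ‖ψn‖ := Mn.le_opNorm _
    rw [hψn_norm] at h7
    have h8 : (C - ε) * ‖ψ‖ ≤ ‖Mn‖ * ‖ψ‖ := by linarith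
    exact le_of_mul_le_mul_right h8 hψ_pos
  -- conclude
  rw [hρH]
  set L := liminf (fun n => ρ (Hseq n)) atTop with hL
  have cobound : IsCoboundedUnder (· ≥ ·) atTop (fun n => ρ (Hseq n)) :=
    (isBoundedUnder_of ⟨1, fun n => hρn_le n⟩).isCoboundedUnder_ge
  by_contra hlt
  push_neg at hlt
  have h := le_liminf_of_le cobound (key ((C - L)/2) (by linarith))
  rw [← hL] at h
  linarith
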